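/- Let (Γ, p, G, τ) be a G-framework in the plane: Γ = (V, E) a finite simple graph, p : V → ℝ², G a finite group acting on Γ by graph automorphisms, and τ : G → O(2) a homomorphism with p_{g·v} = τ(g) p_v for all g, v. Equip C₁ = ℝ^E with the edge permutation action and C₀ = (V → ℝ²) with the action (g·F)_{g·v} = τ(g) F_v, and let ∂ : C₁ → C₀ be the equilibrium map. Then ker ∂ and coker ∂ = C₀ / im ∂ carry induced G-actions, and the symmetric Maxwell rule holds: for every g ∈ G, trace(g on C₀) − trace(g on C₁) = trace(g on coker ∂) − trace(g on ker ∂). -/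

import Mathlib

/-- The equilibrium map of a framework `(Γ, p)` in the plane:
`(∂ w) v = ∑_{u ~ v} w {u,v} • (p v − p u)`. -/
noncomputable def equilibriumMap {Vt : Type} [Fintype Vt] [DecidableEq Vt]
    (Γ : SimpleGraph Vt) [DecidableRel Γ.Adj] (p : Vt → Fin 2 → ℝ) :
    (Γ.edgeSet → ℝ) →ₗ[ℝ] (Vt → Fin 2 → ℝ) where
  toFun w := fun v => ∑ u ∈ (Γ.neighborFinset v).attach,
    w ⟨s(v, u.1), Γ.mem_edgeSet.mpr ((Γ.mem_neighborFinset v u.1).mp u.2)⟩ • (p v - p u.1)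
  map_add' w₁ w₂ := by
    funext v
    simp [add_smul, Finset.sum_add_distrib]
  map_smul' c w := by
    funext v
    simp [mul_smul, Finset.smul_sum]

open LinearMap


lemma trace_prod_gen {K M N : Type*} [Field K] [AddCommGroup M] [Module K M]
    [AddCommGroup N] [Module K N] [FiniteDimensional K M] [FiniteDimensional K N]
    (g : (M × N) →ₗ[K] (M × N)) :
    trace K (M × N) g =
      trace K M (fst K M N ∘ₗ g ∘ₗ inl K M N) + trace K N (snd K M N ∘ₗ g ∘ₗ inr K M N) := by
  have hg : g = (inl K M N ∘ₗ (fst K M N ∘ₗ g ∘ₗ inl K M N) ∘ₗ fst K M N)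
      + (inl K M N ∘ₗ (fst K M N ∘ₗ g ∘ₗ inr K M N) ∘ₗ snd K M N)
      + (inr K M N ∘ₗ (snd K M N ∘ₗ g ∘ₗ inl K M N) ∘ₗ fst K M N)
      + (inr K M N ∘ₗ (snd K M N ∘ₗ g ∘ₗ inr K M N) ∘ₗ snd K M N) := by
    ext x <;> simp <;> rw [show ((0 : M), (0 : N)) = 0 from rfl, map_zero] <;> rfl
  have h1 : ∀ (A : M →ₗ[K] M), trace K (M × N) (inl K M N ∘ₗ A ∘ₗ fst K M N) = trace K M A := by
    intro A
    rw [← comp_assoc, trace_comp_comm', ← comp_assoc, fst_comp_inl, id_comp]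
  have h2 : ∀ (B : N →ₗ[K] M), trace K (M × N) (inl K M N ∘ₗ B ∘ₗ snd K M N) = 0 := by
    intro B
    rw [← comp_assoc, trace_comp_comm', ← comp_assoc, snd_comp_inl, zero_comp, map_zero]
  have h3 : ∀ (C : M →ₗ[K] N), trace K (M × N) (inr K M N ∘ₗ C ∘ₗ fst K M N) = 0 := by
    intro C
    rw [← comp_assoc, trace_comp_comm', ← comp_assoc, fst_comp_inr, zero_comp, map_zero]
  have h4 : ∀ (D : N →ₗ[K] N), trace K (M × N) (inr K M N ∘ₗ D ∘ₗ snd K M N) = trace K N D := by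
    intro D
    rw [← comp_assoc, trace_comp_comm', ← comp_assoc, snd_comp_inr, id_comp]
  conv_lhs => rw [hg]
  simp only [map_add, h1, h2, h3, h4]
  ring

lemma trace_eq_restrict_add_mapQ {K V : Type*} [Field K] [AddCommGroup V] [Module K V]
    [FiniteDimensional K V] (W : Submodule K V) (f : V →ₗ[K] V)
    (hf : ∀ x ∈ W, f x ∈ W) (hle : W ≤ W.comap f) :
    trace K V f = trace K W (f.restrict hf) + trace K (V ⧸ W) (Submodule.mapQ W W f hle) := by
  obtain ⟨U, hU⟩ := Submodule.exists_isCompl W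
  set e := Submodule.prodEquivOfIsCompl W U hU with he
  set q := Submodule.quotientEquivOfIsCompl W U hU with hq
  have hqmk : ∀ z : V, q (Submodule.Quotient.mk z) = (e.symm z).2 := by
    intro z
    have hz : (Submodule.Quotient.mk z : V ⧸ W) = (Submodule.Quotient.mk ((e.symm z).2 : V) : V ⧸ W) := by
      apply (Submodule.Quotient.eq W).mpr
      have hsum : ((e.symm z).1 : V) + ((e.symm z).2 : V) = z := by
        rw [← Submodule.coe_prodEquivOfIsCompl' W U hU (e.symm z)]
        exact e.apply_symm_apply z
      have hdec : z - ((e.symm z).2 : V) = ((e.symm z).1 : V) := by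
        rw [sub_eq_iff_eq_add]; exact hsum.symm
      rw [hdec]
      exact ((e.symm z).1).2
    rw [hz, hq, Submodule.quotientEquivOfIsCompl_apply_mk_coe]
  have htr : trace K V f = trace K (W × U) (e.symm.conj f) := (trace_conj' f e.symm).symm
  rw [htr, trace_prod_gen]
  congr 1
  · congr 1
    ext x
    have hfx : f ((x : V)) ∈ W := hf x x.2
    simp only [LinearMap.coe_comp, Function.comp_apply, LinearEquiv.conj_apply,
      LinearEquiv.coe_coe, LinearMap.inl_apply, LinearMap.fst_apply, LinearEquiv.symm_symm]
    have h1 : e (x, 0) = (x : V) := by simp [he]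
    have h2 : f (x : V) = ((⟨f x, hfx⟩ : W) : V) := rfl
    rw [h1, h2, he, Submodule.prodEquivOfIsCompl_symm_apply_left]
    rfl
  · have hkey : LinearMap.snd K W U ∘ₗ (e.symm.conj f : (W × U) →ₗ[K] (W × U)) ∘ₗ
        LinearMap.inr K W U = q.conj (Submodule.mapQ W W f hle) := by
      ext u
      simp only [LinearMap.coe_comp, Function.comp_apply, LinearEquiv.conj_apply,
        LinearEquiv.coe_coe, LinearMap.inr_apply, LinearMap.snd_apply, LinearEquiv.symm_symm]
      have h1 : e (0, u) = (u : V) := by simp [he]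
      have h2 : q.symm u = Submodule.Quotient.mk (u : V) := rfl
      rw [h1, h2, Submodule.mapQ_apply, hqmk]
    rw [hkey, trace_conj']

lemma equilibriumMap_equivariant {Vt G : Type} [Fintype Vt] [DecidableEq Vt] [Group G]
    (Γ : SimpleGraph Vt) [DecidableRel Γ.Adj] (p : Vt → Fin 2 → ℝ)
    [MulAction G Vt]
    (hadj : ∀ (g : G) (u v : Vt), Γ.Adj u v ↔ Γ.Adj (g • u) (g • v))
    (τ : G →* Matrix.orthogonalGroup (Fin 2) ℝ)
    (hp : ∀ (g : G) (v : Vt), p (g • v) = (τ g : Matrix (Fin 2) (Fin 2) ℝ).mulVec (p v))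
    (T₁ : G → ((Γ.edgeSet → ℝ) →ₗ[ℝ] (Γ.edgeSet → ℝ)))
    (hT₁ : ∀ (g : G) (w : Γ.edgeSet → ℝ) (u v : Vt) (h : s(u, v) ∈ Γ.edgeSet)
      (h' : s(g • u, g • v) ∈ Γ.edgeSet),
      T₁ g w ⟨s(g • u, g • v), h'⟩ = w ⟨s(u, v), h⟩)
    (T₀ : G → ((Vt → Fin 2 → ℝ) →ₗ[ℝ] (Vt → Fin 2 → ℝ)))
    (hT₀ : ∀ (g : G) (F : Vt → Fin 2 → ℝ) (v : Vt),
      T₀ g F (g • v) = (τ g : Matrix (Fin 2) (Fin 2) ℝ).mulVec (F v))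
    (g : G) (w : Γ.edgeSet → ℝ) :
    equilibriumMap Γ p (T₁ g w) = T₀ g (equilibriumMap Γ p w) := by
  have unfold : ∀ (w : Γ.edgeSet → ℝ) (v : Vt), equilibriumMap Γ p w v
      = ∑ u ∈ (Γ.neighborFinset v).attach,
        w ⟨s(v, u.1), Γ.mem_edgeSet.mpr ((Γ.mem_neighborFinset v u.1).mp u.2)⟩ • (p v - p u.1) :=
    fun _ _ => rfl
  funext v'
  have hv : v' = g • (g⁻¹ • v') := (smul_inv_smul g v').symm
  rw [hv, hT₀]
  set v := g⁻¹ • v' with hvdef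
  set L := Matrix.mulVecLin (τ g : Matrix (Fin 2) (Fin 2) ℝ) with hL
  have hLapp : ∀ x, (τ g : Matrix (Fin 2) (Fin 2) ℝ).mulVec x = L x := fun _ => rfl
  rw [unfold, unfold, hLapp, map_sum]
  refine (Finset.sum_bij'
    (fun u _ => (⟨g • u.1, (Γ.mem_neighborFinset _ _).mpr
      ((hadj g v u.1).mp ((Γ.mem_neighborFinset v u.1).mp u.2))⟩ :
        {x // x ∈ Γ.neighborFinset (g • v)}))
    (fun u' _ => (⟨g⁻¹ • u'.1, (Γ.mem_neighborFinset _ _).mpr (by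
      have := (hadj g⁻¹ (g • v) u'.1).mp ((Γ.mem_neighborFinset _ _).mp u'.2)
      rwa [inv_smul_smul] at this)⟩ : {x // x ∈ Γ.neighborFinset v}))
    (fun _ _ => Finset.mem_attach _ _) (fun _ _ => Finset.mem_attach _ _)
    (fun u _ => by ext; exact inv_smul_smul g u.1)
    (fun u' _ => by ext; exact smul_inv_smul g u'.1)
    (fun u _ => ?_)).symm
  have hscal : T₁ g w ⟨s(g • v, g • u.1), Γ.mem_edgeSet.mpr
        ((hadj g v u.1).mp ((Γ.mem_neighborFinset v u.1).mp u.2))⟩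
      = w ⟨s(v, u.1), Γ.mem_edgeSet.mpr ((Γ.mem_neighborFinset v u.1).mp u.2)⟩ :=
    hT₁ g w v u.1 _ _
  have hvec : p (g • v) - p (g • u.1)
      = L (p v - p u.1) := by
    rw [map_sub, hp g v, hp g u.1]; rfl
  rw [map_sub] at hvec
  simp only [map_smul, map_sub]
  rw [← hvec]
  congr 1
  exact hscal.symm

/-- The symmetric Maxwell rule: for a `G`-framework `(Γ, p, τ)` in the plane, with
`C₁ = ℝ^E` carrying the edge permutation action `T₁` and `C₀ = (V → ℝ²)` carrying the
action `T₀` given by `(g·F)_{g·v} = τ(g) F_v`, the kernel and cokernel of the equilibrium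
map `∂` carry induced `G`-actions and, for every `g ∈ G`,
`trace(g on C₀) − trace(g on C₁) = trace(g on coker ∂) − trace(g on ker ∂)`. -/
theorem stmt12 {Vt G : Type} [Fintype Vt] [DecidableEq Vt] [Group G] [Fintype G]
    (Γ : SimpleGraph Vt) [DecidableRel Γ.Adj] (p : Vt → Fin 2 → ℝ)
    [MulAction G Vt]
    (hadj : ∀ (g : G) (u v : Vt), Γ.Adj u v ↔ Γ.Adj (g • u) (g • v))
    (τ : G →* Matrix.orthogonalGroup (Fin 2) ℝ)
    (hp : ∀ (g : G) (v : Vt), p (g • v) = (τ g : Matrix (Fin 2) (Fin 2) ℝ).mulVec (p v))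
    (T₁ : G → ((Γ.edgeSet → ℝ) →ₗ[ℝ] (Γ.edgeSet → ℝ)))
    (hT₁ : ∀ (g : G) (w : Γ.edgeSet → ℝ) (u v : Vt) (h : s(u, v) ∈ Γ.edgeSet)
      (h' : s(g • u, g • v) ∈ Γ.edgeSet),
      T₁ g w ⟨s(g • u, g • v), h'⟩ = w ⟨s(u, v), h⟩)
    (T₀ : G → ((Vt → Fin 2 → ℝ) →ₗ[ℝ] (Vt → Fin 2 → ℝ)))
    (hT₀ : ∀ (g : G) (F : Vt → Fin 2 → ℝ) (v : Vt),
      T₀ g F (g • v) = (τ g : Matrix (Fin 2) (Fin 2) ℝ).mulVec (F v)) :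
    ∃ (hker : ∀ g : G, ∀ x ∈ LinearMap.ker (equilibriumMap Γ p),
        T₁ g x ∈ LinearMap.ker (equilibriumMap Γ p))
      (hrange : ∀ g : G, LinearMap.range (equilibriumMap Γ p) ≤
        (LinearMap.range (equilibriumMap Γ p)).comap (T₀ g)),
      ∀ g : G,
        LinearMap.trace ℝ (Vt → Fin 2 → ℝ) (T₀ g) -
            LinearMap.trace ℝ (Γ.edgeSet → ℝ) (T₁ g) =
          LinearMap.trace ℝ ((Vt → Fin 2 → ℝ) ⧸ LinearMap.range (equilibriumMap Γ p))
              (Submodule.mapQ (LinearMap.range (equilibriumMap Γ p))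
                (LinearMap.range (equilibriumMap Γ p)) (T₀ g) (hrange g)) -
            LinearMap.trace ℝ (LinearMap.ker (equilibriumMap Γ p))
              ((T₁ g).restrict (hker g)) := by
  classical
  set D := equilibriumMap Γ p with hD
  have hcomm : ∀ (g : G) (w : Γ.edgeSet → ℝ), D (T₁ g w) = T₀ g (D w) := fun g w => by
    have := equilibriumMap_equivariant Γ p hadj τ hp T₁ hT₁ T₀ hT₀ g w
    simpa [hD] using this
  have hker : ∀ g : G, ∀ x ∈ LinearMap.ker D, T₁ g x ∈ LinearMap.ker D := by
    intro g x hx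
    rw [LinearMap.mem_ker] at hx ⊢
    rw [hcomm g x, hx, map_zero]
  have hrange : ∀ g : G, LinearMap.range D ≤ (LinearMap.range D).comap (T₀ g) := by
    intro g y hy
    obtain ⟨w, hw⟩ := hy
    exact ⟨T₁ g w, by rw [hcomm g w, hw]⟩
  refine ⟨hker, hrange, fun g => ?_⟩
  have hfr : ∀ x ∈ LinearMap.range D, T₀ g x ∈ LinearMap.range D := fun x hx => hrange g hx
  have hle₁ : LinearMap.ker D ≤ (LinearMap.ker D).comap (T₁ g) := fun x hx => hker g x hx
  have h0 := trace_eq_restrict_add_mapQ (LinearMap.range D) (T₀ g) hfr (hrange g)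
  have h1 := trace_eq_restrict_add_mapQ (LinearMap.ker D) (T₁ g) (hker g) hle₁
  set e := D.quotKerEquivRange with he
  have hconj : e.conj (Submodule.mapQ (LinearMap.ker D) (LinearMap.ker D) (T₁ g) hle₁)
      = (T₀ g).restrict hfr := by
    apply LinearMap.ext
    intro x
    rw [LinearEquiv.conj_apply]
    simp only [LinearMap.coe_comp, Function.comp_apply, LinearEquiv.coe_coe]
    obtain ⟨w, hw⟩ := Submodule.Quotient.mk_surjective _ (e.symm x)
    have hx : x = e (Submodule.Quotient.mk w) := by rw [hw, e.apply_symm_apply]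
    subst hx
    rw [e.symm_apply_apply]
    apply Subtype.ext
    rw [Submodule.mapQ_apply]
    have h2 : ((e (Submodule.Quotient.mk (T₁ g w))) : Vt → Fin 2 → ℝ) = D (T₁ g w) :=
      D.quotKerEquivRange_apply_mk (T₁ g w)
    have h3 : ((e (Submodule.Quotient.mk w)) : Vt → Fin 2 → ℝ) = D w :=
      D.quotKerEquivRange_apply_mk w
    rw [h2, LinearMap.restrict_coe_apply, h3]
    exact hcomm g w
  have htr : LinearMap.trace ℝ _ ((T₀ g).restrict hfr)
      = LinearMap.trace ℝ _ (Submodule.mapQ (LinearMap.ker D) (LinearMap.ker D) (T₁ g) hle₁) := by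
    rw [← hconj]
    exact trace_conj' _ e
  rw [h0, h1]
  rw [htr]
  ring
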